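/- A strongly connected tournament T with diameter two contains at most 3 critical vertices. Moreover, for each c with 1 ≤ c ≤ 3, T contains exactly c critical vertices if and only if T is obtained from the cyclic triple Δ by replacing precisely 3−c of its three vertices by strongly connected tournaments of order at least 3 with diameter 2. -/

import Mathlib

/-- A tournament on a vertex type `V`: every ordered pair of distinct vertices
carries exactly one arc. `adj v w = true` means there is an arc from `v` to `w`
(`v` dominates `w`). -/
structure Tournament (V : Type*) where
  adj : V → V → Bool
  irrefl : ∀ v, adj v v = false
  compl : ∀ v w, v ≠ w → adj v w = !adj w v

namespace Tournament

variable {V : Type*} {W : Type*}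

/-- The subtournament induced on a set of vertices. -/
def restrict (T : Tournament V) (s : Set V) : Tournament s where
  adj a b := T.adj a b
  irrefl a := T.irrefl a
  compl a b h := T.compl a b (fun hab => h (Subtype.ext hab))

/-- A tournament is strongly connected if every vertex can be reached from
every other one by a directed path. -/
def Strong (T : Tournament V) : Prop :=
  ∀ v w : V, Relation.ReflTransGen (fun a b => T.adj a b = true) v w

/-- A vertex of a tournament is non-critical if deleting it leaves a strongly
connected tournament. -/
def Noncritical (T : Tournament V) (w : V) : Prop :=
  (T.restrict {x | x ≠ w}).Strong

/-- There is a directed walk of length `k` from `v` to `w`. -/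
def HasWalk (T : Tournament V) (v w : V) (k : ℕ) : Prop :=
  ∃ f : Fin (k + 1) → V, f 0 = v ∧ f (Fin.last k) = w ∧
    ∀ i : Fin k, T.adj (f i.castSucc) (f i.succ) = true

/-- The distance from `v` to `w`: the length of a shortest directed path. -/
noncomputable def dist (T : Tournament V) (v w : V) : ℕ :=
  sInf {k | T.HasWalk v w k}

/-- The diameter: the maximum distance over ordered pairs of distinct vertices. -/
noncomputable def diam (T : Tournament V) : ℕ :=
  sSup {m | ∃ v w : V, v ≠ w ∧ T.dist v w = m}

/-- Cyclic successor on `Fin ℓ`. -/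
def cyc {ℓ : ℕ} (i : Fin ℓ) : Fin ℓ :=
  if h : i.val + 1 < ℓ then ⟨i.val + 1, h⟩ else ⟨0, i.pos⟩

/-- The number of circuits (directed cycles through distinct vertices) of
length `ℓ` in `T`.  Each circuit is represented by exactly `ℓ` cyclic
parametrisations, whence the division. -/
noncomputable def circCount (T : Tournament V) (ℓ : ℕ) : ℕ :=
  Nat.card {f : Fin ℓ → V // Function.Injective f ∧
    ∀ i : Fin ℓ, T.adj (f i) (f (cyc i)) = true} / ℓ

/-- The number of circuits of length `ℓ` in `T` passing through the vertex `w`. -/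
noncomputable def circCountAt (T : Tournament V) (ℓ : ℕ) (w : V) : ℕ :=
  Nat.card {f : Fin ℓ → V // Function.Injective f ∧
    (∀ i : Fin ℓ, T.adj (f i) (f (cyc i)) = true) ∧ ∃ i, f i = w} / ℓ

/-- The number of strongly connected subtournaments of order `ℓ` in `T`. -/
noncomputable def strongSubCount (T : Tournament V) (ℓ : ℕ) : ℕ :=
  Nat.card {s : Finset V // s.card = ℓ ∧ (T.restrict ↑s).Strong}

/-- Isomorphism of tournaments. -/
def Iso (T : Tournament V) (S : Tournament W) : Prop :=
  ∃ e : V ≃ W, ∀ a b : V, T.adj a b = S.adj (e a) (e b)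

/-- Build a tournament from the function `f` recording which arcs point
"upwards" with respect to a linear order on the vertices. -/
def ofFn [LinearOrder V] (f : V → V → Bool) : Tournament V where
  adj u v := if u < v then f u v else if v < u then !f v u else false
  irrefl v := by simp
  compl u v h := by
    rcases lt_trichotomy u v with h1 | h1 | h1
    · simp [h1, not_lt_of_gt h1]
    · exact absurd h1 h
    · simp [h1, not_lt_of_gt h1]

/-- The tournament `T_{n-1,n}(z_0,…,z_{n-1})`: `z_i → z_{i+1}` and `z_j → z_i`
for `j > i + 1`. -/
def lineT (n : ℕ) : Tournament (Fin n) :=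
  ofFn fun i j => decide (j.val = i.val + 1)

end Tournament

namespace Tournament

variable {V : Type*}

-- basic lemmas
lemma adj_ne {T : Tournament V} {v w : V} (h : T.adj v w = true) : v ≠ w := by
  rintro rfl; rw [T.irrefl] at h; cases h

lemma adj_asymm {T : Tournament V} {v w : V} (h : T.adj v w = true) : T.adj w v = false := by
  have := T.compl w v (Ne.symm (adj_ne h))
  rw [this, h]; rfl

lemma adj_total (T : Tournament V) {v w : V} (h : v ≠ w) :
    T.adj v w = true ∨ T.adj w v = true := by
  have hc := T.compl v w h
  cases hwv : T.adj w v
  · rw [hwv] at hc; exact Or.inl (by simpa using hc)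
  · exact Or.inr rfl

lemma hasWalk_one {T : Tournament V} {v w : V} (h : T.adj v w = true) : T.HasWalk v w 1 :=
  ⟨![v, w], rfl, rfl, fun i => by fin_cases i; simpa using h⟩

lemma hasWalk_two {T : Tournament V} {v z w : V} (h1 : T.adj v z = true)
    (h2 : T.adj z w = true) : T.HasWalk v w 2 :=
  ⟨![v, z, w], rfl, rfl, fun i => by fin_cases i <;> simp_all⟩

lemma HasWalk.tail {T : Tournament V} {v b c : V} {k : ℕ} (h : T.HasWalk v b k)
    (hbc : T.adj b c = true) : T.HasWalk v c (k + 1) := by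
  obtain ⟨f, h0, hl, hs⟩ := h
  refine ⟨fun i => if hi : i.val < k + 1 then f ⟨i, hi⟩ else c, ?_, ?_, ?_⟩
  · simpa using h0
  · simp [Fin.last]
  · intro i
    by_cases hik : i.val < k
    · have h1 : (i.castSucc : Fin (k + 2)).val < k + 1 := by
        simp; omega
      have h2 : (i.succ : Fin (k + 2)).val < k + 1 := by simpa using hik
      simp only [dif_pos h1, dif_pos h2]
      have := hs ⟨i.val, hik⟩
      convert this using 2 <;> simp [Fin.castSucc, Fin.castAdd, Fin.castLE, Fin.succ]
    · have hik' : i.val = k := by omega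
      have h1 : (i.castSucc : Fin (k + 2)).val < k + 1 := by
        simp; omega
      have h2 : ¬ (i.succ : Fin (k + 2)).val < k + 1 := by simp; omega
      simp only [dif_pos h1, dif_neg h2]
      have : (⟨(i.castSucc : Fin (k+2)).val, h1⟩ : Fin (k+1)) = Fin.last k := by
        ext; simpa using hik'
      rw [this, hl]; exact hbc

lemma exists_hasWalk_of_reflTransGen {T : Tournament V} {v w : V}
    (h : Relation.ReflTransGen (fun a b => T.adj a b = true) v w) : ∃ k, T.HasWalk v w k := by
  induction h with
  | refl => exact ⟨0, fun _ => v, rfl, rfl, fun i => i.elim0⟩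
  | tail _ h2 ih => obtain ⟨k, hk⟩ := ih; exact ⟨k + 1, hk.tail h2⟩

lemma eq_of_hasWalk_zero {T : Tournament V} {v w : V} (h : T.HasWalk v w 0) : v = w := by
  obtain ⟨f, h0, hl, _⟩ := h
  rw [← h0, ← hl]; exact congrArg f (show (0 : Fin 1) = Fin.last 0 from rfl)

lemma adj_of_hasWalk_one {T : Tournament V} {v w : V} (h : T.HasWalk v w 1) :
    T.adj v w = true := by
  obtain ⟨f, h0, hl, hs⟩ := h
  have := hs 0
  rw [show ((0 : Fin 1).castSucc : Fin 2) = 0 by rfl, show ((0 : Fin 1).succ : Fin 2) = Fin.last 1 by rfl,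
    h0, hl] at this
  exact this

lemma hasWalk_two_elim {T : Tournament V} {v w : V} (h : T.HasWalk v w 2) :
    ∃ z, T.adj v z = true ∧ T.adj z w = true := by
  obtain ⟨f, h0, hl, hs⟩ := h
  refine ⟨f 1, ?_, ?_⟩
  · have := hs 0
    rw [show ((0 : Fin 2).castSucc : Fin 3) = 0 by rfl, show ((0 : Fin 2).succ : Fin 3) = 1 by rfl,
      h0] at this
    exact this
  · have := hs 1
    rw [show ((1 : Fin 2).castSucc : Fin 3) = 1 by rfl, show ((1 : Fin 2).succ : Fin 3) = Fin.last 2 by rfl,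
      hl] at this
    exact this

lemma dist_mem {T : Tournament V} (hT : T.Strong) (v w : V) : T.HasWalk v w (T.dist v w) :=
  Nat.sInf_mem (exists_hasWalk_of_reflTransGen (hT v w))

lemma dist_le_diam [Finite V] (T : Tournament V) {v w : V} (h : v ≠ w) :
    T.dist v w ≤ T.diam := by
  have hfin : {m | ∃ v w : V, v ≠ w ∧ T.dist v w = m}.Finite :=
    Set.Finite.subset (Set.finite_range (fun p : V × V => T.dist p.1 p.2))
      (by rintro m ⟨a, b, _, rfl⟩; exact ⟨(a, b), rfl⟩)
  exact le_csSup hfin.bddAbove ⟨v, w, h, rfl⟩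

lemma two_step [Finite V] {T : Tournament V} (hT : T.Strong) (hdiam : T.diam = 2)
    {v w : V} (h : v ≠ w) :
    T.adj v w = true ∨ ∃ z, T.adj v z = true ∧ T.adj z w = true := by
  have hd : T.dist v w ≤ 2 := hdiam ▸ dist_le_diam T h
  have hw := dist_mem hT v w
  have h3 : T.dist v w = 0 ∨ T.dist v w = 1 ∨ T.dist v w = 2 := by omega
  rcases h3 with he | he | he <;> rw [he] at hw
  · exact absurd (eq_of_hasWalk_zero hw) h
  · exact Or.inl (adj_of_hasWalk_one hw)
  · exact Or.inr (hasWalk_two_elim hw)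


lemma diam_eq_two' {α : Type*} [Finite α] (S : Tournament α)
    (h2 : ∀ x y : α, x ≠ y → (S.adj x y = true ∨ ∃ z, S.adj x z = true ∧ S.adj z y = true))
    (hpair : ∃ x y : α, x ≠ y) : S.diam = 2 := by
  have hle : ∀ x y : α, x ≠ y → S.dist x y ≤ 2 := by
    intro x y hxy
    rcases h2 x y hxy with h | ⟨z, hz1, hz2⟩
    · exact le_trans (Nat.sInf_le (hasWalk_one h)) one_le_two
    · exact Nat.sInf_le (hasWalk_two hz1 hz2)
  obtain ⟨x, y, hxy⟩ := hpair
  obtain ⟨a, b, hab, hfalse⟩ : ∃ a b : α, a ≠ b ∧ S.adj a b = false := by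
    cases h : S.adj x y
    · exact ⟨x, y, hxy, h⟩
    · exact ⟨y, x, hxy.symm, adj_asymm h⟩
  have hd2 : S.dist a b = 2 := by
    refine le_antisymm (hle a b hab) (le_csInf ?_ ?_)
    · rcases h2 a b hab with h | ⟨z, h1, h2'⟩
      · rw [h] at hfalse; cases hfalse
      · exact ⟨2, hasWalk_two h1 h2'⟩
    · intro m hm
      match m, hm with
      | 0, hm => exact absurd (eq_of_hasWalk_zero hm) hab
      | 1, hm => rw [adj_of_hasWalk_one hm] at hfalse; cases hfalse
      | (n + 2), _ => omega
  have hset : ∀ m ∈ {m | ∃ v w : α, v ≠ w ∧ S.dist v w = m}, m ≤ 2 := by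
    rintro m ⟨v, w, hvw, rfl⟩; exact hle v w hvw
  exact le_antisymm (csSup_le ⟨2, a, b, hab, hd2⟩ hset) (le_csSup ⟨2, hset⟩ ⟨a, b, hab, hd2⟩)

/-- reachability inside `s`, phrased on the ambient type -/
def RAdj (T : Tournament V) (s : Set V) (a b : V) : Prop :=
  a ∈ s ∧ b ∈ s ∧ T.adj a b = true

lemma reach_restrict_iff (T : Tournament V) (s : Set V) (x y : s) :
    Relation.ReflTransGen (fun a b : s => (T.restrict s).adj a b = true) x y ↔
      Relation.ReflTransGen (T.RAdj s) x y := by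
  constructor
  · intro h
    induction h with
    | refl => exact .refl
    | tail _ h2 ih =>
      exact ih.tail ⟨Subtype.prop _, Subtype.prop _, h2⟩
  · intro h
    have key : ∀ c : V, Relation.ReflTransGen (T.RAdj s) ↑x c → ∀ hc : c ∈ s,
        Relation.ReflTransGen (fun a b : s => (T.restrict s).adj a b = true) x ⟨c, hc⟩ := by
      intro c h
      induction h with
      | refl => intro hc; exact .refl
      | tail _ h2 ih => intro hc; exact (ih h2.1).tail h2.2.2
    exact key y h y.2

lemma strong_restrict_iff (T : Tournament V) (s : Set V) :
    (T.restrict s).Strong ↔ ∀ x ∈ s, ∀ y ∈ s, Relation.ReflTransGen (T.RAdj s) x y := by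
  constructor
  · intro h x hx y hy; exact (reach_restrict_iff T s ⟨x, hx⟩ ⟨y, hy⟩).mp (h ⟨x, hx⟩ ⟨y, hy⟩)
  · intro h x y; exact (reach_restrict_iff T s x y).mpr (h x x.2 y y.2)

lemma restrict_strong_of_two_step (T : Tournament V) (s : Set V)
    (h2 : ∀ x ∈ s, ∀ y ∈ s, x ≠ y →
      (T.adj x y = true ∨ ∃ z ∈ s, T.adj x z = true ∧ T.adj z y = true)) :
    (T.restrict s).Strong := by
  rw [strong_restrict_iff]
  intro x hx y hy
  rcases eq_or_ne x y with rfl | hxy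
  · exact .refl
  rcases h2 x hx y hy hxy with h | ⟨z, hz, ha, hb⟩
  · exact .single ⟨hx, hy, h⟩
  · exact .tail (.single ⟨hx, hz, ha⟩) ⟨hz, hy, hb⟩

lemma restrict_diam_eq_two [Finite V] (T : Tournament V) (s : Set V)
    (h2 : ∀ x ∈ s, ∀ y ∈ s, x ≠ y →
      (T.adj x y = true ∨ ∃ z ∈ s, T.adj x z = true ∧ T.adj z y = true))
    (hpair : ∃ x ∈ s, ∃ y ∈ s, x ≠ y) : (T.restrict s).diam = 2 := by
  apply diam_eq_two'
  · rintro ⟨x, hx⟩ ⟨y, hy⟩ hxy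
    have hxy' : x ≠ y := fun h => hxy (Subtype.ext h)
    rcases h2 x hx y hy hxy' with h | ⟨z, hz, ha, hb⟩
    · exact Or.inl h
    · exact Or.inr ⟨⟨z, hz⟩, ha, hb⟩
  · obtain ⟨x, hx, y, hy, hxy⟩ := hpair
    exact ⟨⟨x, hx⟩, ⟨y, hy⟩, fun h => hxy (congrArg Subtype.val h)⟩

lemma pair_aux (T : Tournament V) {s : Set V} {a b : V}
    (hmem : ∀ z ∈ s, z = a ∨ z = b) (h : T.adj a b = true)
    (hr : Relation.ReflTransGen (T.RAdj s) b a) : False := by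
  have hne := adj_ne h
  rcases Relation.ReflTransGen.cases_head hr with heq | ⟨z, hz, _⟩
  · exact hne heq.symm
  · have hbz : T.adj b z = true := hz.2.2
    rcases hmem z hz.2.1 with rfl | rfl
    · rw [adj_asymm h] at hbz; cases hbz
    · exact adj_ne hbz rfl

lemma strong_card_ne_two [Finite V] (T : Tournament V) (s : Set V)
    (hs : (T.restrict s).Strong) : Nat.card s ≠ 2 := by
  intro h
  rw [Nat.card_coe_set_eq] at h
  obtain ⟨x, y, hxy, rfl⟩ := Set.ncard_eq_two.mp h
  rw [strong_restrict_iff] at hs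
  have hx : x ∈ ({x, y} : Set V) := Set.mem_insert _ _
  have hy : y ∈ ({x, y} : Set V) := Set.mem_insert_of_mem _ rfl
  have hmem : ∀ z ∈ ({x, y} : Set V), z = x ∨ z = y := by
    intro z hz; simpa using hz
  rcases adj_total T hxy with h' | h'
  · exact pair_aux T hmem h' (hs y hy x hx)
  · exact pair_aux T (fun z hz => (hmem z hz).symm) h' (hs x hx y hy)


lemma fin3_cases (i : Fin 3) : i = 0 ∨ i = 1 ∨ i = 2 := by omega

lemma fin3_tri (i j : Fin 3) : j = i ∨ j = i + 1 ∨ j = i + 2 := by revert i j; decide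

lemma fin3_ne_add_one (i : Fin 3) : i ≠ i + 1 := by revert i; decide
lemma fin3_ne_add_two (i : Fin 3) : i ≠ i + 2 := by revert i; decide
lemma fin3_add_one_ne_add_two (i : Fin 3) : i + 1 ≠ i + 2 := by revert i; decide
lemma fin3_add_two_add_one (i : Fin 3) : i + 2 + 1 = i := by revert i; decide

lemma critical_of_card_eq_one [Finite V] (T : Tournament V) (π : V → Fin 3)
    (hsurj : Function.Surjective π)
    (harc : ∀ a b, π a ≠ π b → (T.adj a b = true ↔ π b = π a + 1)) (x : V)
    (hcard : Nat.card (π ⁻¹' {π x}) = 1) : ¬ T.Noncritical x := by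
  have hsub := (Nat.card_eq_one_iff_unique.mp hcard).1
  have hfib : ∀ a, π a = π x → a = x := by
    intro a ha
    exact congrArg Subtype.val (hsub.elim (⟨a, ha⟩ : (π ⁻¹' {π x})) ⟨x, rfl⟩)
  intro hs
  rw [Noncritical, strong_restrict_iff] at hs
  obtain ⟨a, ha⟩ := hsurj (π x + 1)
  obtain ⟨b, hb⟩ := hsurj (π x + 2)
  have hax : a ≠ x := by intro h; rw [h] at ha; exact fin3_ne_add_one (π x) ha
  have hbx : b ≠ x := by intro h; rw [h] at hb; exact fin3_ne_add_two (π x) hb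
  have hr := hs b hbx a hax
  have inv : ∀ c, Relation.ReflTransGen (T.RAdj {z | z ≠ x}) b c → π c = π x + 2 := by
    intro c hc
    induction hc with
    | refl => exact hb
    | @tail m c _ h2 ih =>
      rcases eq_or_ne (π m) (π c) with he | hne
      · rw [← he]; exact ih
      · have hc1 : π c = π m + 1 := (harc m c hne).mp h2.2.2
        have hc2 : π c = π x := by rw [hc1, ih, fin3_add_two_add_one]
        exact absurd (hfib c hc2) h2.2.1
  have := inv a hr
  rw [ha] at this
  exact fin3_add_one_ne_add_two (π x) this

lemma noncritical_of_card_ne_one [Finite V] (T : Tournament V) (π : V → Fin 3)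
    (hsurj : Function.Surjective π)
    (harc : ∀ a b, π a ≠ π b → (T.adj a b = true ↔ π b = π a + 1)) (x : V)
    (hcard : Nat.card (π ⁻¹' {π x}) ≠ 1) : T.Noncritical x := by
  have hpos : 0 < Nat.card (π ⁻¹' {π x}) := by
    have : Nonempty (π ⁻¹' {π x}) := ⟨⟨x, rfl⟩⟩
    exact Nat.card_pos
  have hlt : 1 < (π ⁻¹' {π x}).ncard := by rw [← Nat.card_coe_set_eq]; omega
  obtain ⟨x', hx'f, hx'x⟩ := Set.exists_ne_of_one_lt_ncard hlt x
  have hx'π : π x' = π x := hx'f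
  have hrep : ∀ i : Fin 3, ∃ z, π z = i ∧ z ≠ x := by
    intro i
    rcases eq_or_ne i (π x) with rfl | hne
    · exact ⟨x', hx'π, hx'x⟩
    · obtain ⟨z, hz⟩ := hsurj i
      exact ⟨z, hz, fun h => hne (by rw [← hz, h])⟩
  choose g hg1 hg2 using hrep
  rw [Noncritical, strong_restrict_iff]
  intro p hp q hq
  have hp' : p ≠ x := hp
  have hq' : q ≠ x := hq
  have stepR : ∀ a b : V, a ≠ x → b ≠ x → π b = π a + 1 → T.RAdj {z | z ≠ x} a b := by
    intro a b ha hb hab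
    refine ⟨ha, hb, (harc a b ?_).mpr hab⟩
    rw [hab]; exact fin3_ne_add_one (π a)
  rcases eq_or_ne p q with rfl | hpq
  · exact .refl
  rcases fin3_tri (π p) (π q) with he | he | he
  · refine Relation.ReflTransGen.tail (Relation.ReflTransGen.tail
      (Relation.ReflTransGen.single (stepR p (g (π p + 1)) hp' (hg2 _) (by rw [hg1])))
      (stepR (g (π p + 1)) (g (π p + 2)) (hg2 _) (hg2 _) (by rw [hg1, hg1]; generalize π p = t; revert t; decide)))
      (stepR (g (π p + 2)) q (hg2 _) hq' ?_)
    rw [hg1, fin3_add_two_add_one]; exact he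
  · exact .single (stepR p q hp' hq' he)
  · exact .tail (.single (stepR p (g (π p + 1)) hp' (hg2 _) (by rw [hg1])))
      (stepR (g (π p + 1)) q (hg2 _) hq' (by rw [hg1, he]; generalize π p = t; revert t; decide))

lemma crit_iff [Finite V] (T : Tournament V) (π : V → Fin 3)
    (hsurj : Function.Surjective π)
    (harc : ∀ a b, π a ≠ π b → (T.adj a b = true ↔ π b = π a + 1)) (x : V) :
    ¬ T.Noncritical x ↔ Nat.card (π ⁻¹' {π x}) = 1 := by
  constructor
  · intro h
    by_contra hne
    exact h (noncritical_of_card_ne_one T π hsurj harc x hne)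
  · exact critical_of_card_eq_one T π hsurj harc x

lemma count_eq [Finite V] (T : Tournament V) (π : V → Fin 3)
    (hsurj : Function.Surjective π)
    (harc : ∀ a b, π a ≠ π b → (T.adj a b = true ↔ π b = π a + 1)) :
    Nat.card {x : V // ¬ T.Noncritical x} =
      Nat.card {i : Fin 3 // Nat.card (π ⁻¹' {i}) = 1} := by
  refine Nat.card_eq_of_bijective
    (fun x => (⟨π x.1, (crit_iff T π hsurj harc x.1).mp x.2⟩ :
      {i : Fin 3 // Nat.card (π ⁻¹' {i}) = 1})) ⟨?_, ?_⟩
  · rintro ⟨x, hx⟩ ⟨y, hy⟩ hxy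
    have hππ : π x = π y := congrArg Subtype.val hxy
    have hcard := (crit_iff T π hsurj harc x).mp hx
    have hsub := (Nat.card_eq_one_iff_unique.mp hcard).1
    have hxy' : (⟨x, rfl⟩ : (π ⁻¹' {π x})) = ⟨y, hππ.symm⟩ := hsub.elim _ _
    have hxyv : x = y := congrArg Subtype.val hxy'
    exact Subtype.ext hxyv
  · rintro ⟨i, hi⟩
    obtain ⟨a, ha⟩ : Nonempty (π ⁻¹' {i}) := (Nat.card_eq_one_iff_unique.mp hi).2
    have hai : π a = i := ha
    refine ⟨⟨a, ?_⟩, ?_⟩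
    · exact (crit_iff T π hsurj harc a).mpr (by rw [hai]; exact hi)
    · exact Subtype.ext hai

lemma structure_of_critical [Finite V] (T : Tournament V) (hT : T.Strong) (hdiam : T.diam = 2)
    {w : V} (hw : ¬ T.Noncritical w) :
    ∃ π : V → Fin 3, Function.Surjective π ∧
      (∀ a b, π a ≠ π b → (T.adj a b = true ↔ π b = π a + 1)) ∧
      (∀ i, Nat.card (π ⁻¹' {i}) ≠ 1 →
        3 ≤ Nat.card (π ⁻¹' {i}) ∧ (T.restrict (π ⁻¹' {i})).Strong ∧
          (T.restrict (π ⁻¹' {i})).diam = 2) := by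
  classical
  rw [Noncritical, strong_restrict_iff] at hw
  push_neg at hw
  obtain ⟨u, hu, v, hv, huv⟩ := hw
  have hu' : u ≠ w := hu
  have hv' : v ≠ w := hv
  set R := T.RAdj {y | y ≠ w} with hR
  set π : V → Fin 3 := fun z => if z = w then 2 else
    if Relation.ReflTransGen R z v then 0 else 1 with hπdef
  have hπw : π w = 2 := by simp [hπdef]
  have hπ0 : ∀ z, π z = 0 ↔ (z ≠ w ∧ Relation.ReflTransGen R z v) := by
    intro z
    by_cases h1 : z = w <;> by_cases h2 : Relation.ReflTransGen R z v <;>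
      simp [hπdef, h1, h2]
  have hπ1 : ∀ z, π z = 1 ↔ (z ≠ w ∧ ¬ Relation.ReflTransGen R z v) := by
    intro z
    by_cases h1 : z = w <;> by_cases h2 : Relation.ReflTransGen R z v <;>
      simp [hπdef, h1, h2]
  have hπ2 : ∀ z, π z = 2 ↔ z = w := by
    intro z
    by_cases h1 : z = w <;> by_cases h2 : Relation.ReflTransGen R z v <;>
      simp [hπdef, h1, h2]
  have hπv : π v = 0 := (hπ0 v).mpr ⟨hv', .refl⟩
  have hπu : π u = 1 := (hπ1 u).mpr ⟨hu', huv⟩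
  -- all arcs from the 0-class to the 1-class
  have F1 : ∀ a b, π a = 0 → π b = 1 → T.adj a b = true := by
    intro a b ha hb
    obtain ⟨haw, hav⟩ := (hπ0 a).mp ha
    obtain ⟨hbw, hbv⟩ := (hπ1 b).mp hb
    have hab : a ≠ b := by rintro rfl; exact hbv hav
    rcases adj_total T hab with h | h
    · exact h
    · exact absurd (Relation.ReflTransGen.head ⟨hbw, haw, h⟩ hav) hbv
  have F23 : ∀ a b, π a = 1 → π b = 0 → T.adj a w = true ∧ T.adj w b = true := by
    intro a b ha hb
    have haw : a ≠ w := ((hπ1 a).mp ha).1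
    have hbw : b ≠ w := ((hπ0 b).mp hb).1
    have hab : a ≠ b := by
      intro h; rw [h, hb] at ha; cases ha
    have hfalse : T.adj a b = false := adj_asymm (F1 b a hb ha)
    rcases two_step hT hdiam hab with h | ⟨z, h1, h2⟩
    · rw [h] at hfalse; cases hfalse
    · rcases eq_or_ne z w with rfl | hzw
      · exact ⟨h1, h2⟩
      · rcases fin3_cases (π z) with h0 | h1' | h2'
        · have := adj_asymm (F1 z a h0 ha); rw [h1] at this; cases this
        · have := adj_asymm (F1 b z hb h1'); rw [h2] at this; cases this
        · exact absurd ((hπ2 z).mp h2') hzw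
  have F2 : ∀ a, π a = 1 → T.adj a w = true := fun a ha => (F23 a v ha hπv).1
  have F3 : ∀ b, π b = 0 → T.adj w b = true := fun b hb => (F23 u b hπu hb).2
  -- surjectivity
  have hsurj : Function.Surjective π := by
    intro i
    rcases fin3_cases i with rfl | rfl | rfl
    · exact ⟨v, hπv⟩
    · exact ⟨u, hπu⟩
    · exact ⟨w, hπw⟩
  -- the arc condition
  have harc : ∀ a b, π a ≠ π b → (T.adj a b = true ↔ π b = π a + 1) := by
    intro a b hne
    have hab : a ≠ b := fun h => hne (congrArg π h)
    rcases fin3_cases (π a) with ha | ha | ha <;> rcases fin3_cases (π b) with hb | hb | hb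
    · exact absurd (ha.trans hb.symm) hne
    · rw [ha, hb]
      exact iff_of_true (F1 a b ha hb) (by decide)
    · have hbw := (hπ2 b).mp hb
      rw [ha, hb]
      refine iff_of_false ?_ (by decide)
      rw [hbw, T.compl a w (hbw ▸ hab), F3 a ha]; simp
    · rw [ha, hb]
      refine iff_of_false ?_ (by decide)
      rw [T.compl a b hab, F1 b a hb ha]; simp
    · exact absurd (ha.trans hb.symm) hne
    · have hbw := (hπ2 b).mp hb
      rw [ha, hb]
      refine iff_of_true ?_ (by decide)
      rw [hbw]; exact F2 a ha
    · have haw := (hπ2 a).mp ha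
      rw [ha, hb]
      refine iff_of_true ?_ (by decide)
      rw [haw]; exact F3 b hb
    · have haw := (hπ2 a).mp ha
      rw [ha, hb]
      refine iff_of_false ?_ (by decide)
      rw [haw, T.compl w b (haw ▸ hab), F2 b hb]; simp
    · exact absurd (ha.trans hb.symm) hne
  -- fiber facts
  have hfib2 : π ⁻¹' {(2 : Fin 3)} = {w} := by
    ext z
    simp only [Set.mem_preimage, Set.mem_singleton_iff]
    exact hπ2 z
  have hcard2 : Nat.card (π ⁻¹' {(2 : Fin 3)}) = 1 := by
    rw [hfib2, Nat.card_coe_set_eq, Set.ncard_singleton]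
  -- two-step property inside fibers 0 and 1
  have hts : ∀ i : Fin 3, i ≠ 2 → ∀ x ∈ π ⁻¹' {i}, ∀ y ∈ π ⁻¹' {i}, x ≠ y →
      (T.adj x y = true ∨ ∃ z ∈ π ⁻¹' {i}, T.adj x z = true ∧ T.adj z y = true) := by
    intro i hi2 x hx y hy hxy
    have hx' : π x = i := hx
    have hy' : π y = i := hy
    rcases two_step hT hdiam hxy with h | ⟨z, h1, h2⟩
    · exact Or.inl h
    · refine Or.inr ⟨z, ?_, h1, h2⟩
      show π z = i
      have hxw : x ≠ w := fun h => hi2 (by rw [← hx', h, hπw])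
      have hyw : y ≠ w := fun h => hi2 (by rw [← hy', h, hπw])
      rcases fin3_cases i with rfl | rfl | rfl
      · rcases fin3_cases (π z) with h0 | h1' | h2'
        · exact h0
        · have := adj_asymm (F1 y z hy' h1'); rw [h2] at this; cases this
        · obtain rfl : z = w := (hπ2 z).mp h2'
          have : T.adj x z = false := by rw [T.compl x z hxw, F3 x hx']; simp
          rw [h1] at this; cases this
      · rcases fin3_cases (π z) with h0 | h1' | h2'
        · have := adj_asymm (F1 z x h0 hx'); rw [h1] at this; cases this
        · exact h1'
        · obtain rfl : z = w := (hπ2 z).mp h2'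
          have : T.adj z y = false := by rw [T.compl z y (Ne.symm hyw), F2 y hy']; simp
          rw [h2] at this; cases this
      · exact absurd rfl hi2
  refine ⟨π, hsurj, harc, ?_⟩
  intro i hi
  have hi2 : i ≠ 2 := fun h => hi (h ▸ hcard2)
  have hne : Nonempty (π ⁻¹' {i}) := by
    obtain ⟨z, hz⟩ := hsurj i
    exact ⟨⟨z, hz⟩⟩
  have hpos : 0 < Nat.card (π ⁻¹' {i}) := Nat.card_pos
  have hstrong : (T.restrict (π ⁻¹' {i})).Strong :=
    restrict_strong_of_two_step T _ (hts i hi2)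
  have hne2 : Nat.card (π ⁻¹' {i}) ≠ 2 := strong_card_ne_two T _ hstrong
  have h3 : 3 ≤ Nat.card (π ⁻¹' {i}) := by omega
  have hpair : ∃ x ∈ π ⁻¹' {i}, ∃ y ∈ π ⁻¹' {i}, x ≠ y := by
    have hlt : 1 < (π ⁻¹' {i}).ncard := by rw [← Nat.card_coe_set_eq]; omega
    obtain ⟨x, hx⟩ := hne
    obtain ⟨y, hy, hyx⟩ := Set.exists_ne_of_one_lt_ncard hlt x
    exact ⟨y, hy, x, hx, hyx⟩
  exact ⟨h3, hstrong, restrict_diam_eq_two T _ (hts i hi2) hpair⟩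

end Tournament

/-- **Proposition 1.** A strongly connected tournament of diameter `2` has at
most `3` critical vertices; and for `1 ≤ c ≤ 3` it has exactly `c` critical
vertices iff it is obtained from the cyclic triple `Δ` by replacing exactly
`3 - c` of its vertices by strongly connected tournaments of order at least
`3` with diameter `2`. -/
theorem statement_9 {V : Type} [Finite V] (T : Tournament V) (hT : T.Strong)
    (hdiam : T.diam = 2) :
    Nat.card {x : V // ¬ T.Noncritical x} ≤ 3 ∧
    (∀ c : ℕ, 1 ≤ c → c ≤ 3 →
      (Nat.card {x : V // ¬ T.Noncritical x} = c ↔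
        ∃ π : V → Fin 3, Function.Surjective π ∧
          (∀ a b : V, π a ≠ π b → (T.adj a b = true ↔ π b = π a + 1)) ∧
          Nat.card {i : Fin 3 // Nat.card ↥(π ⁻¹' {i}) = 1} = c ∧
          (∀ i : Fin 3, Nat.card ↥(π ⁻¹' {i}) ≠ 1 →
            (3 ≤ Nat.card ↥(π ⁻¹' {i}) ∧ (T.restrict (π ⁻¹' {i})).Strong ∧
              (T.restrict (π ⁻¹' {i})).diam = 2)))) := by
  constructor
  · by_cases h : ∃ x : V, ¬ T.Noncritical x
    · obtain ⟨w, hw⟩ := h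
      obtain ⟨π, hsurj, harc, _⟩ := Tournament.structure_of_critical T hT hdiam hw
      rw [Tournament.count_eq T π hsurj harc]
      have hle : Nat.card {i : Fin 3 // Nat.card (π ⁻¹' {i}) = 1} ≤ Nat.card (Fin 3) :=
        Nat.card_le_card_of_injective Subtype.val Subtype.val_injective
      simpa using hle
    · push_neg at h
      have hempty : IsEmpty {x : V // ¬ T.Noncritical x} := ⟨fun x => x.2 (h x.1)⟩
      rw [Nat.card_of_isEmpty]
      omega
  · intro c hc1 _
    constructor
    · intro hcount
      have hne : Nonempty {x : V // ¬ T.Noncritical x} := by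
        by_contra h
        rw [not_nonempty_iff] at h
        rw [Nat.card_of_isEmpty] at hcount
        omega
      obtain ⟨⟨w, hw⟩⟩ := hne
      obtain ⟨π, hsurj, harc, hfib⟩ := Tournament.structure_of_critical T hT hdiam hw
      exact ⟨π, hsurj, harc,
        by rw [← Tournament.count_eq T π hsurj harc]; exact hcount, hfib⟩
    · rintro ⟨π, hsurj, harc, hcount, hfib⟩
      rw [Tournament.count_eq T π hsurj harc]
      exact hcount
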